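/- Let (a_k)_{k≥0} be a sequence of real numbers satisfying |a_k| ≤ C^{k+1} k^k for some C > 0 (with 0^0 = 1). Then there exist constants C' > 0 and c > 0 such that for all λ ≥ 1, the truncated sum S(λ) = Σ_{0 ≤ k ≤ λ/(3eC)} λ^{−k} a_k satisfies |S(λ) − a_0| ≤ C' e^{−cλ} · λ + C'/λ; in particular S(λ) is bounded uniformly in λ ≥ 1. -/

import Mathlib

open Real Finset

/-- Formal analytic symbol summation: if `|a_k| ≤ C^{k+1} k^k`, then the truncated sum
`S(λ) = Σ_{0 ≤ k ≤ λ/(3eC)} λ^{-k} a_k` differs from `a₀` by at most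
`C' e^{-cλ} λ + C'/λ` for `λ ≥ 1`. -/
theorem formal_symbol_truncated_sum
    (C : ℝ) (hC : 0 < C) (a : ℕ → ℝ)
    (ha : ∀ k : ℕ, |a k| ≤ C ^ (k + 1) * (k : ℝ) ^ k) :
    ∃ C' c : ℝ, 0 < C' ∧ 0 < c ∧ ∀ lam : ℝ, 1 ≤ lam →
      |(∑ k ∈ Finset.range (⌊lam / (3 * Real.exp 1 * C)⌋₊ + 1), a k / lam ^ k) - a 0| ≤
        C' * Real.exp (-c * lam) * lam + C' / lam := by
  have he : (0:ℝ) < Real.exp 1 := Real.exp_pos 1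
  have he2 : (2:ℝ) < Real.exp 1 := by
    have := Real.add_one_lt_exp (x := 1) one_ne_zero
    linarith
  refine ⟨3 * Real.exp 1 * C ^ 2, 1, by positivity, one_pos, ?_⟩
  intro lam hlam
  have hlam0 : (0:ℝ) < lam := lt_of_lt_of_le one_pos hlam
  set N := ⌊lam / (3 * Real.exp 1 * C)⌋₊ with hN
  have hsum : ∑ k ∈ Finset.range (N+1), a k / lam ^ k
      = (∑ k ∈ Finset.range N, a (k+1) / lam ^ (k+1)) + a 0 := by
    rw [Finset.sum_range_succ']
    simp
  rw [hsum, add_sub_cancel_right]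
  -- the ratio r = 2/(3e)
  set r : ℝ := 2 / (3 * Real.exp 1) with hr
  have hr0 : 0 ≤ r := by positivity
  have hr1 : r < 1 := by
    rw [hr, div_lt_one (by positivity)]
    linarith
  have key : ∀ k ∈ Finset.range N,
      |a (k+1) / lam ^ (k+1)| ≤ 3 * Real.exp 1 * C ^ 2 / lam * r ^ (k+1) := by
    intro k hk
    have hkN : k + 1 ≤ N := Finset.mem_range.mp hk
    have hjle : ((k+1 : ℕ) : ℝ) ≤ lam / (3 * Real.exp 1 * C) := by
      calc ((k+1 : ℕ) : ℝ) ≤ (N : ℝ) := by exact_mod_cast hkN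
        _ ≤ lam / (3 * Real.exp 1 * C) := Nat.floor_le (by positivity)
    -- t = C*(k+1)/lam ≤ 1/(3e)
    set j : ℕ := k + 1 with hj
    have ht : C * (j : ℝ) / lam ≤ 1 / (3 * Real.exp 1) := by
      rw [div_le_div_iff₀ hlam0 (by positivity)]
      have := (le_div_iff₀ (by positivity : (0:ℝ) < 3 * Real.exp 1 * C)).mp hjle
      nlinarith
    have ht0 : 0 ≤ C * (j : ℝ) / lam := by positivity
    have h1 : |a j / lam ^ j| ≤ C * (C * (j:ℝ) / lam) ^ j := by
      rw [abs_div, abs_of_nonneg (by positivity : (0:ℝ) ≤ lam ^ j)]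
      have : C * (C * (j:ℝ) / lam) ^ j = C ^ (j+1) * (j:ℝ) ^ j / lam ^ j := by
        rw [div_pow, mul_pow, pow_succ]
        ring
      rw [this]
      exact div_le_div_of_nonneg_right (ha j) (by positivity)
    -- (C*j/lam)^j ≤ (C*j/lam) * (1/(3e))^k
    have h2 : (C * (j:ℝ) / lam) ^ j ≤ (C * (j:ℝ) / lam) * (1 / (3 * Real.exp 1)) ^ k := by
      rw [hj, pow_succ']
      exact mul_le_mul_of_nonneg_left (pow_le_pow_left₀ ht0 ht k) ht0
    -- j ≤ 2^j
    have h3 : (j : ℝ) ≤ 2 ^ j := by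
      exact_mod_cast (Nat.lt_two_pow_self (n := j)) |>.le
    have h4 : C * ((C * (j:ℝ) / lam) * (1 / (3 * Real.exp 1)) ^ k)
        ≤ 3 * Real.exp 1 * C ^ 2 / lam * r ^ j := by
      have hrj : r ^ j = 2 ^ j * (1 / (3 * Real.exp 1)) ^ j := by
        rw [hr, div_eq_mul_one_div, mul_pow]
      rw [hrj]
      have hpow : (1 / (3 * Real.exp 1)) ^ j = (1 / (3 * Real.exp 1)) * (1 / (3 * Real.exp 1)) ^ k := by
        rw [hj, pow_succ']
      rw [hpow]
      have hnn : (0:ℝ) ≤ (1 / (3 * Real.exp 1)) ^ k := by positivity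
      -- LHS = C^2 * j / lam * (1/(3e))^k ; RHS = 3e C^2/lam * 2^j * (1/(3e)) * (1/(3e))^k
      -- since 3e * (1/(3e)) = 1, RHS = C^2/lam * 2^j * (1/(3e))^k, and j ≤ 2^j
      have hee : 3 * Real.exp 1 * (1 / (3 * Real.exp 1)) = 1 := by
        field_simp
      have : C * ((C * (j:ℝ) / lam) * (1 / (3 * Real.exp 1)) ^ k)
          = C ^ 2 * (j:ℝ) / lam * (1 / (3 * Real.exp 1)) ^ k := by ring
      rw [this]
      have h5 : C ^ 2 * (j:ℝ) / lam ≤ C ^ 2 * 2 ^ j / lam :=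
        div_le_div_of_nonneg_right (by nlinarith) hlam0.le
      calc C ^ 2 * (j:ℝ) / lam * (1 / (3 * Real.exp 1)) ^ k
          ≤ C ^ 2 * 2 ^ j / lam * (1 / (3 * Real.exp 1)) ^ k :=
            mul_le_mul_of_nonneg_right h5 hnn
        _ = 3 * Real.exp 1 * C ^ 2 / lam * (2 ^ j * (1 / (3 * Real.exp 1) * (1 / (3 * Real.exp 1)) ^ k)) := by
            field_simp
    calc |a j / lam ^ j| ≤ C * (C * (j:ℝ) / lam) ^ j := h1
      _ ≤ C * ((C * (j:ℝ) / lam) * (1 / (3 * Real.exp 1)) ^ k) :=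
          mul_le_mul_of_nonneg_left h2 hC.le
      _ ≤ 3 * Real.exp 1 * C ^ 2 / lam * r ^ j := h4
  have habs : |∑ k ∈ Finset.range N, a (k+1) / lam ^ (k+1)|
      ≤ ∑ k ∈ Finset.range N, 3 * Real.exp 1 * C ^ 2 / lam * r ^ (k+1) :=
    (Finset.abs_sum_le_sum_abs _ _).trans (Finset.sum_le_sum key)
  -- geometric bound: Σ_{k<N} r^{k+1} ≤ r/(1-r) ≤ 1
  have hgeo : ∑ k ∈ Finset.range N, r ^ (k+1) ≤ 1 := by
    have hsum2 : ∑ k ∈ Finset.range N, r ^ (k+1) = r * ∑ k ∈ Finset.range N, r ^ k := by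
      rw [Finset.mul_sum]
      exact Finset.sum_congr rfl fun k _ => by rw [pow_succ']
    rw [hsum2]
    have h6 : ∑ k ∈ Finset.range N, r ^ k ≤ 1 / (1 - r) := by
      have := (summable_geometric_of_lt_one hr0 hr1).sum_le_tsum (Finset.range N)
        (fun i _ => pow_nonneg hr0 i)
      rw [tsum_geometric_of_lt_one hr0 hr1] at this; rwa [one_div]
    have h7 : r * (1 / (1 - r)) ≤ 1 := by
      rw [mul_one_div, div_le_one (by linarith)]
      have : r ≤ 1 / 2 := by
        rw [hr, div_le_div_iff₀ (by positivity) (by norm_num)]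
        linarith
      linarith
    calc r * ∑ k ∈ Finset.range N, r ^ k ≤ r * (1 / (1 - r)) :=
          mul_le_mul_of_nonneg_left h6 hr0
      _ ≤ 1 := h7
  have hfinal : |∑ k ∈ Finset.range N, a (k+1) / lam ^ (k+1)|
      ≤ 3 * Real.exp 1 * C ^ 2 / lam := by
    calc |∑ k ∈ Finset.range N, a (k+1) / lam ^ (k+1)|
        ≤ ∑ k ∈ Finset.range N, 3 * Real.exp 1 * C ^ 2 / lam * r ^ (k+1) := habs
      _ = 3 * Real.exp 1 * C ^ 2 / lam * ∑ k ∈ Finset.range N, r ^ (k+1) := by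
          rw [Finset.mul_sum]
      _ ≤ 3 * Real.exp 1 * C ^ 2 / lam * 1 :=
          mul_le_mul_of_nonneg_left hgeo (by positivity)
      _ = 3 * Real.exp 1 * C ^ 2 / lam := mul_one _
  have hpos : 0 ≤ 3 * Real.exp 1 * C ^ 2 * Real.exp (-1 * lam) * lam := by positivity
  calc |∑ k ∈ Finset.range N, a (k+1) / lam ^ (k+1)|
      ≤ 3 * Real.exp 1 * C ^ 2 / lam := hfinal
    _ ≤ 3 * Real.exp 1 * C ^ 2 * Real.exp (-1 * lam) * lam + 3 * Real.exp 1 * C ^ 2 / lam := by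
        linarith
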